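/- For every c > 0, κ > 1, r > 0 and N > 0 there exist constants C > 0 and t₀ > 0 (depending on c, κ, r, N and the volume comparability constants) such that for all t ≥ t₀ and all x, y ∈ M: V(x, t + d(x,y)) · (t + d(x,y))^{2(κ−1)} · ∫₀^r V(x,√u)^{−1} exp(−t²/(4u)) exp(−c d(x,y)²/u) u^{−κ} du ≤ C t^{−N}. -/

import Mathlib

open MeasureTheory Metric Real Filter

lemma aux_exp_ge (x : ℝ) (hx : 0 ≤ x) (k : ℕ) : x ^ k / k.factorial ≤ Real.exp x := by
  calc x ^ k / k.factorial ≤ ∑ i ∈ Finset.range (k+1), x ^ i / i.factorial := by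
        refine Finset.single_le_sum (f := fun i => x ^ i / i.factorial) ?_
          (Finset.self_mem_range_succ k)
        intro i _; positivity
    _ ≤ Real.exp x := Real.sum_le_exp_of_nonneg hx _

lemma aux_exp_neg_le (x : ℝ) (hx : 0 < x) (k : ℕ) :
    Real.exp (-x) ≤ k.factorial / x ^ k := by
  rw [Real.exp_neg]
  have h1 : (0:ℝ) < x ^ k / k.factorial := by positivity
  calc (Real.exp x)⁻¹ ≤ (x ^ k / k.factorial)⁻¹ :=
        inv_anti₀ h1 (aux_exp_ge x hx.le k)
    _ = k.factorial / x ^ k := by rw [inv_div]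

set_option maxHeartbeats 1000000 in
theorem stmt_4
    {M : Type*} [MetricSpace M] [MeasurableSpace M] [BorelSpace M]
    (μ : Measure M)
    (hVpos : ∀ (x : M) (r : ℝ), 0 < r → 0 < μ (ball x r))
    (hVfin : ∀ (x : M) (r : ℝ), 0 < r → μ (ball x r) < ⊤)
    -- volume comparability
    (ν ν' c₀ C₀ : ℝ) (hν' : 0 < ν') (hνν : ν' ≤ ν) (hc₀ : 0 < c₀) (hc₀C₀ : c₀ ≤ C₀)
    (hdoub : ∀ (x : M) (r R : ℝ), 0 < r → r ≤ R →
        c₀ * (R/r) ^ ν' ≤ (μ (ball x R)).toReal / (μ (ball x r)).toReal ∧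
        (μ (ball x R)).toReal / (μ (ball x r)).toReal ≤ C₀ * (R/r) ^ ν)
    (hcomp : ∀ (x y : M) (r : ℝ), 0 < r →
        (μ (ball x r)).toReal ≤ C₀ * (1 + dist x y / r) ^ ν * (μ (ball y r)).toReal) :
    ∀ c : ℝ, 0 < c → ∀ κ : ℝ, 1 < κ → ∀ r : ℝ, 0 < r → ∀ N : ℝ, 0 < N →
      ∃ C t₀ : ℝ, 0 < C ∧ 0 < t₀ ∧ ∀ t : ℝ, t₀ ≤ t → ∀ x y : M,
        (μ (ball x (t + dist x y))).toReal * (t + dist x y) ^ (2*(κ-1)) *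
            (∫ u in Set.Ioc (0:ℝ) r,
              ((μ (ball x (Real.sqrt u))).toReal)⁻¹ * Real.exp (-(t^2)/(4*u)) *
                Real.exp (-c * (dist x y)^2 / u) * u ^ (-κ))
          ≤ C * t ^ (-N) := by
  intro c hc κ hκ r hr N hN
  have hν : 0 < ν := lt_of_lt_of_le hν' hνν
  have hC₀ : 0 < C₀ := lt_of_lt_of_le hc₀ hc₀C₀
  set m : ℕ := ⌈κ + ν/2⌉₊ + 1 with hm
  have hmge : κ + ν/2 + 1 ≤ (m:ℝ) := by
    have h := Nat.le_ceil (κ + ν/2)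
    push_cast [hm]; linarith
  set p : ℝ := (m:ℝ) - κ - ν/2 with hp
  have hp1 : 1 ≤ p := by rw [hp]; linarith
  set α : ℝ := ν + 2*(κ-1) with hα
  have hα0 : 0 < α := by rw [hα]; nlinarith
  set k : ℕ := ⌈α/2⌉₊ with hk
  have hk2 : α ≤ 2*(k:ℝ) := by
    have := Nat.le_ceil (α/2); rw [hk]; linarith
  set n : ℕ := ⌈N/2⌉₊ with hn
  have hn2 : N ≤ 2*(n:ℝ) := by
    have := Nat.le_ceil (N/2); rw [hn]; linarith
  set ε : ℝ := min (1/(8*r)) (c/r) with hε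
  have hε0 : 0 < ε := lt_min (by positivity) (by positivity)
  refine ⟨(C₀ * m.factorial * 8^m * r^p * r) * ((k.factorial * (4/ε)^k) * (n.factorial * (4/ε)^n)),
    max 1 (Real.sqrt r), by positivity, by positivity, ?_⟩
  intro t ht x y
  have ht1 : (1:ℝ) ≤ t := le_trans (le_max_left _ _) ht
  have htr : Real.sqrt r ≤ t := le_trans (le_max_right _ _) ht
  have ht0 : (0:ℝ) < t := lt_of_lt_of_le one_pos ht1
  set d := dist x y with hd
  have hd0 : 0 ≤ d := dist_nonneg
  set s := t + d with hs
  have hs0 : 0 < s := by positivity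
  have hts : t ≤ s := le_add_of_nonneg_right hd0
  have hs1 : (1:ℝ) ≤ s := le_trans ht1 hts
  have hVs0 : 0 < (μ (ball x s)).toReal :=
    ENNReal.toReal_pos (hVpos x s hs0).ne' (hVfin x s hs0).ne
  -- the constant bound for the integrand
  set E : ℝ := Real.exp (-(t^2)/(8*r)) * Real.exp (-c*d^2/r) with hE
  set B : ℝ := ((μ (ball x s)).toReal)⁻¹ * (C₀ * m.factorial * 8^m * r^p) * s^ν * E with hB
  have key : ∀ u ∈ Set.Ioc (0:ℝ) r,
      ((μ (ball x (Real.sqrt u))).toReal)⁻¹ * Real.exp (-(t^2)/(4*u)) *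
        Real.exp (-c*d^2/u) * u ^ (-κ) ≤ B := by
    intro u hu
    obtain ⟨hu0, hur⟩ := hu
    have hsu0 : 0 < Real.sqrt u := Real.sqrt_pos.2 hu0
    have hsu : Real.sqrt u ≤ s :=
      le_trans (le_trans (Real.sqrt_le_sqrt hur) htr) hts
    have hVu0 : 0 < (μ (ball x (Real.sqrt u))).toReal :=
      ENNReal.toReal_pos (hVpos x _ hsu0).ne' (hVfin x _ hsu0).ne
    have hratio := (hdoub x (Real.sqrt u) s hsu0 hsu).2
    have hVuinv : ((μ (ball x (Real.sqrt u))).toReal)⁻¹ ≤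
        C₀ * (s / Real.sqrt u) ^ ν * ((μ (ball x s)).toReal)⁻¹ := by
      have h1 : ((μ (ball x (Real.sqrt u))).toReal)⁻¹ =
          ((μ (ball x s)).toReal / (μ (ball x (Real.sqrt u))).toReal) *
            ((μ (ball x s)).toReal)⁻¹ := by
        field_simp
      rw [h1]
      exact mul_le_mul_of_nonneg_right hratio (by positivity)
    have e1 : Real.exp (-(t^2)/(4*u)) =
        Real.exp (-(t^2)/(8*u)) * Real.exp (-(t^2)/(8*u)) := by
      rw [← Real.exp_add]; congr 1; field_simp; ring
    have e2 : Real.exp (-(t^2)/(8*u)) ≤ Real.exp (-(t^2)/(8*r)) := by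
      apply Real.exp_le_exp.2
      rw [neg_div, neg_div, neg_le_neg_iff]
      gcongr
      all_goals first | positivity | linarith
    have e3 : Real.exp (-c*d^2/u) ≤ Real.exp (-c*d^2/r) := by
      apply Real.exp_le_exp.2
      rw [neg_mul, neg_div, neg_div, neg_le_neg_iff]
      gcongr
      all_goals first | positivity | linarith
    have e4 : Real.exp (-(t^2)/(8*u)) ≤ (m.factorial : ℝ) * 8^m * u^m := by
      have h1 := aux_exp_neg_le (t^2/(8*u)) (by positivity) m
      rw [neg_div]
      refine h1.trans ?_
      have h2 : (m.factorial : ℝ) / (t^2/(8*u))^m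
          = (m.factorial : ℝ) * 8^m * u^m / (t^2)^m := by
        rw [div_pow, mul_pow]
        field_simp
      rw [h2]
      apply div_le_self (by positivity)
      exact one_le_pow₀ (by nlinarith)
    calc ((μ (ball x (Real.sqrt u))).toReal)⁻¹ * Real.exp (-(t^2)/(4*u)) *
          Real.exp (-c*d^2/u) * u ^ (-κ)
        = ((μ (ball x (Real.sqrt u))).toReal)⁻¹ *
            (Real.exp (-(t^2)/(8*u)) * Real.exp (-(t^2)/(8*u))) *
            Real.exp (-c*d^2/u) * u ^ (-κ) := by rw [e1]
      _ ≤ (C₀ * (s / Real.sqrt u) ^ ν * ((μ (ball x s)).toReal)⁻¹) *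
            (Real.exp (-(t^2)/(8*r)) * ((m.factorial : ℝ) * 8^m * u^m)) *
            Real.exp (-c*d^2/r) * u ^ (-κ) := by
          gcongr
          all_goals first | positivity | exact Real.rpow_nonneg hu0.le _
      _ = (((μ (ball x s)).toReal)⁻¹ * (C₀ * m.factorial * 8^m) * s^ν * E) *
            ((Real.sqrt u) ^ (-ν) * u ^ ((m:ℕ):ℝ) * u ^ (-κ)) := by
          rw [Real.div_rpow hs0.le hsu0.le, Real.rpow_neg hsu0.le,
            Real.rpow_natCast, hE]
          ring
      _ = (((μ (ball x s)).toReal)⁻¹ * (C₀ * m.factorial * 8^m) * s^ν * E) * u ^ p := by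
          congr 1
          rw [Real.sqrt_eq_rpow, ← Real.rpow_mul hu0.le,
            ← Real.rpow_add hu0, ← Real.rpow_add hu0]
          congr 1
          rw [hp]; push_cast; ring
      _ ≤ (((μ (ball x s)).toReal)⁻¹ * (C₀ * m.factorial * 8^m) * s^ν * E) * r ^ p := by
          have hEnn : (0:ℝ) ≤ E := by rw [hE]; positivity
          gcongr
          all_goals first | positivity | exact Real.rpow_le_rpow hu0.le hur (by linarith)
      _ = B := by rw [hB]; ring
  -- bound the integral by the constant
  have hEnn : (0:ℝ) ≤ E := by rw [hE]; positivity
  have hBnn : (0:ℝ) ≤ B := by rw [hB]; positivity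
  have hint : (∫ u in Set.Ioc (0:ℝ) r,
      ((μ (ball x (Real.sqrt u))).toReal)⁻¹ * Real.exp (-(t^2)/(4*u)) *
        Real.exp (-c*d^2/u) * u ^ (-κ)) ≤ B * r := by
    have h1 : (∫ u in Set.Ioc (0:ℝ) r,
        ((μ (ball x (Real.sqrt u))).toReal)⁻¹ * Real.exp (-(t^2)/(4*u)) *
          Real.exp (-c*d^2/u) * u ^ (-κ)) ≤ ∫ _ in Set.Ioc (0:ℝ) r, B := by
      apply integral_mono_of_nonneg
      · filter_upwards [ae_restrict_mem measurableSet_Ioc] with u hu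
        have hu0 : 0 < u := hu.1
        positivity
      · exact integrableOn_const measure_Ioc_lt_top.ne
      · filter_upwards [ae_restrict_mem measurableSet_Ioc] with u hu
        exact key u hu
    refine h1.trans ?_
    rw [setIntegral_const, measureReal_def, Real.volume_Ioc, smul_eq_mul, sub_zero,
      ENNReal.toReal_ofReal hr.le, mul_comm]
  -- final estimate
  have hE2 : E ≤ Real.exp (-(ε*s^2/4)) * Real.exp (-(ε*t^2/4)) := by
    have h1 : ε * t^2 ≤ t^2/(8*r) := by
      have := min_le_left (1/(8*r)) (c/r)
      calc ε * t^2 ≤ (1/(8*r)) * t^2 := by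
            apply mul_le_mul_of_nonneg_right _ (sq_nonneg t); rw [hε]; exact this
        _ = t^2/(8*r) := by ring
    have h2 : ε * d^2 ≤ c*d^2/r := by
      have := min_le_right (1/(8*r)) (c/r)
      calc ε * d^2 ≤ (c/r) * d^2 := by
            apply mul_le_mul_of_nonneg_right _ (sq_nonneg d); rw [hε]; exact this
        _ = c*d^2/r := by ring
    have h3 : ε*s^2/4 + ε*t^2/4 ≤ t^2/(8*r) + c*d^2/r := by
      have h4 : s^2 ≤ 2*(t^2 + d^2) := by rw [hs]; nlinarith [sq_nonneg (t-d)]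
      have h5 : ε*s^2 ≤ 2*(ε*t^2) + 2*(ε*d^2) := by
        calc ε*s^2 ≤ ε*(2*(t^2 + d^2)) := mul_le_mul_of_nonneg_left h4 hε0.le
          _ = 2*(ε*t^2) + 2*(ε*d^2) := by ring
      have hεt : 0 ≤ ε*t^2 := by positivity
      have hεd : 0 ≤ ε*d^2 := by positivity
      nlinarith [h1, h2, h5, hεt, hεd]
    rw [hE, ← Real.exp_add, ← Real.exp_add]
    apply Real.exp_le_exp.2
    rw [neg_div, neg_mul, neg_div]
    linarith
  have hsE : s ^ α * Real.exp (-(ε*s^2/4)) ≤ (k.factorial : ℝ) * (4/ε)^k := by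
    have h1 : s ^ α ≤ s ^ ((2*k : ℕ) : ℝ) := by
      apply Real.rpow_le_rpow_of_exponent_le hs1
      push_cast; linarith
    have h2 := aux_exp_neg_le (ε*s^2/4) (by positivity) k
    calc s ^ α * Real.exp (-(ε*s^2/4))
        ≤ s ^ ((2*k : ℕ) : ℝ) * ((k.factorial : ℝ) / (ε*s^2/4)^k) := by
          apply mul_le_mul h1 h2 (Real.exp_nonneg _) (Real.rpow_nonneg hs0.le _)
      _ = (k.factorial : ℝ) * (4/ε)^k := by
          rw [Real.rpow_natCast, div_pow, mul_pow, ← pow_mul, div_pow]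
          have hsk : (s:ℝ) ^ (2*k) ≠ 0 := by positivity
          field_simp
  have htE : Real.exp (-(ε*t^2/4)) ≤ (n.factorial : ℝ) * (4/ε)^n * t ^ (-N) := by
    have h2 := aux_exp_neg_le (ε*t^2/4) (by positivity) n
    have h4 : (n.factorial : ℝ) / (ε*t^2/4)^n
        = ((n.factorial : ℝ) * (4/ε)^n) * (t ^ (2*n))⁻¹ := by
      rw [div_pow, mul_pow, ← pow_mul, div_pow]
      field_simp
    have h5 : ((t : ℝ) ^ (2*n))⁻¹ ≤ t ^ (-N) := by
      rw [← Real.rpow_natCast t (2*n), ← Real.rpow_neg ht0.le]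
      exact Real.rpow_le_rpow_of_exponent_le ht1 (by push_cast; linarith)
    calc Real.exp (-(ε*t^2/4)) ≤ (n.factorial : ℝ) / (ε*t^2/4)^n := h2
      _ = ((n.factorial : ℝ) * (4/ε)^n) * (t ^ (2*n))⁻¹ := h4
      _ ≤ ((n.factorial : ℝ) * (4/ε)^n) * t ^ (-N) :=
          mul_le_mul_of_nonneg_left h5 (by positivity)
  calc (μ (ball x s)).toReal * s ^ (2*(κ-1)) *
        (∫ u in Set.Ioc (0:ℝ) r,
          ((μ (ball x (Real.sqrt u))).toReal)⁻¹ * Real.exp (-(t^2)/(4*u)) *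
            Real.exp (-c*d^2/u) * u ^ (-κ))
      ≤ (μ (ball x s)).toReal * s ^ (2*(κ-1)) * (B * r) := by
        apply mul_le_mul_of_nonneg_left hint
        positivity
    _ = ((μ (ball x s)).toReal * ((μ (ball x s)).toReal)⁻¹) *
          ((C₀ * m.factorial * 8^m * r^p * r) * (s ^ (2*(κ-1)) * s^ν) * E) := by
        rw [hB]; ring
    _ = (C₀ * m.factorial * 8^m * r^p * r) * (s ^ (2*(κ-1)) * s^ν) * E := by
        rw [mul_inv_cancel₀ hVs0.ne', one_mul]
    _ = (C₀ * m.factorial * 8^m * r^p * r) * s ^ α * E := by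
        rw [← Real.rpow_add hs0]; congr 2; rw [hα]; ring
    _ ≤ (C₀ * m.factorial * 8^m * r^p * r) *
          (s ^ α * (Real.exp (-(ε*s^2/4)) * Real.exp (-(ε*t^2/4)))) := by
        rw [mul_assoc, ← mul_assoc (s ^ α)]
        apply mul_le_mul_of_nonneg_left _ (by positivity)
        rw [mul_assoc]
        exact mul_le_mul_of_nonneg_left hE2 (Real.rpow_nonneg hs0.le _)
    _ ≤ (C₀ * m.factorial * 8^m * r^p * r) *
          (((k.factorial : ℝ) * (4/ε)^k) * ((n.factorial : ℝ) * (4/ε)^n * t ^ (-N))) := by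
        apply mul_le_mul_of_nonneg_left _ (by positivity)
        rw [← mul_assoc]
        exact mul_le_mul hsE htE (Real.exp_nonneg _) (by positivity)
    _ = (C₀ * m.factorial * 8^m * r^p * r) *
          ((k.factorial * (4/ε)^k) * (n.factorial * (4/ε)^n)) * t ^ (-N) := by ring
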